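/- Let γ ∈ (0,1), a ∈ ℝ, b ≠ 0, c_z, c_u > 0, and let p be the unique positive solution of the DARE p = γa²p + c_z − γ²a²b²p²/(c_u + γb²p). Define g = −γb/(c_u + γb²p) and h = a(1 + bpg). Then √γ·|h| < 1, and in particular γ|h| < 1. -/

import Mathlib

/-- Closed-loop stability of the discounted LQR: √γ·|h| < 1 and γ·|h| < 1. -/
theorem closed_loop_stable
    (γ a b cz cu p g h : ℝ)
    (hγ : γ ∈ Set.Ioo (0 : ℝ) 1) (hb : b ≠ 0) (hcz : 0 < cz) (hcu : 0 < cu)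
    (hp : 0 < p)
    (hDARE : p = γ * a ^ 2 * p + cz
        - γ ^ 2 * a ^ 2 * b ^ 2 * p ^ 2 / (cu + γ * b ^ 2 * p))
    (hpuniq : ∀ q : ℝ, 0 < q →
        q = γ * a ^ 2 * q + cz - γ ^ 2 * a ^ 2 * b ^ 2 * q ^ 2 / (cu + γ * b ^ 2 * q)
        → q = p)
    (hg : g = -γ * b / (cu + γ * b ^ 2 * p))
    (hh : h = a * (1 + b * p * g)) :
    Real.sqrt γ * |h| < 1 ∧ γ * |h| < 1 := by
  obtain ⟨hγ0, hγ1⟩ := hγ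
  have hD : 0 < cu + γ * b ^ 2 * p := by positivity
  have hDne : (cu + γ * b ^ 2 * p) ≠ 0 := ne_of_gt hD
  have hh' : h = a * cu / (cu + γ * b ^ 2 * p) := by
    rw [hh, hg]; field_simp; ring
  -- DARE cleared of denominators
  have hD' : p * (cu + γ * b ^ 2 * p) = γ * a ^ 2 * p * cu + cz * (cu + γ * b ^ 2 * p) := by
    have := hDARE
    field_simp at this
    nlinarith [this]
  -- key inequality: γ h² < 1
  have key : γ * h ^ 2 < 1 := by
    rw [hh']
    rw [div_pow, show γ * ((a * cu) ^ 2 / (cu + γ * b ^ 2 * p) ^ 2)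
        = γ * (a * cu) ^ 2 / (cu + γ * b ^ 2 * p) ^ 2 from (mul_div_assoc _ _ _).symm,
      div_lt_one (by positivity)]
    -- γ a² p cu = (p - cz)(cu + γ b² p), with p - cz ≥ 0
    have hpc : γ * a ^ 2 * p * cu = (p - cz) * (cu + γ * b ^ 2 * p) := by nlinarith [hD']
    have hpcz : 0 ≤ p - cz := by
      nlinarith [mul_pos hp hcu, sq_nonneg a, mul_nonneg (mul_nonneg (mul_nonneg hγ0.le (sq_nonneg a)) hp.le) hcu.le]
    have hb2 : 0 < b ^ 2 := by positivity
    nlinarith [hpc, mul_pos hD (mul_pos hcz hcu), mul_pos hD (mul_pos hγ0 (mul_pos hb2 (mul_pos hp hp))), mul_pos hp hD, sq_nonneg (a*cu)]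
  have habs : 0 ≤ |h| := abs_nonneg h
  have h1 : Real.sqrt γ * |h| < 1 := by
    have hsq : (Real.sqrt γ * |h|) ^ 2 < 1 := by
      rw [mul_pow, Real.sq_sqrt hγ0.le, sq_abs]
      exact key
    nlinarith [mul_nonneg (Real.sqrt_nonneg γ) habs]
  refine ⟨h1, ?_⟩
  have hs1 : Real.sqrt γ < 1 := by
    rw [show (1:ℝ) = Real.sqrt 1 by simp]
    exact Real.sqrt_lt_sqrt hγ0.le hγ1
  have : γ * |h| = Real.sqrt γ * (Real.sqrt γ * |h|) := by
    rw [← mul_assoc, Real.mul_self_sqrt hγ0.le]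
  rw [this]
  calc Real.sqrt γ * (Real.sqrt γ * |h|) ≤ 1 * (Real.sqrt γ * |h|) := by
        apply mul_le_mul_of_nonneg_right hs1.le (by positivity)
    _ = Real.sqrt γ * |h| := one_mul _
    _ < 1 := h1
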